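/- arXiv:0801.2987 — 2 statements merged into one kernel-verified Lean document; each statement's English description precedes it below -/
import Mathlib

section
/- Let A be an n×n symmetric matrix over a field F. Then rank(A) ≤ k if and only if there exist an invertible symmetric k×k matrix B and a k×n matrix U over F such that A = Uᵀ B U. -/
open Matrix

lemma aux_decomp {F : Type*} [Field F] {n : ℕ}
    (A : Matrix (Fin n) (Fin n) F) (hA : A.IsSymm) :
    ∃ (S : Matrix (Fin A.rank) (Fin A.rank) F) (Y : Matrix (Fin n) (Fin A.rank) F),
      S.IsSymm ∧ IsUnit S ∧ A = Y * S * Yᵀ := by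
  classical
  set r := A.rank with hr
  set R := LinearMap.range A.mulVecLin with hR
  have hfin : Module.finrank F R = r := rfl
  let b : Module.Basis (Fin r) F R := Module.finBasisOfFinrankEq F R hfin
  let Y : Matrix (Fin n) (Fin r) F := Matrix.of fun i l => (b l : Fin n → F) i
  have hcol : ∀ j, (fun i => A i j) ∈ R := by
    intro j
    refine ⟨Pi.single j 1, ?_⟩
    ext i
    simp [Matrix.mulVecLin_apply, Matrix.mulVec_single]
  let Z : Matrix (Fin r) (Fin n) F := Matrix.of fun l j => b.repr ⟨_, hcol j⟩ l
  have hYZ : Y * Z = A := by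
    ext i j
    have h := congrFun (congrArg (Subtype.val) (b.sum_repr ⟨_, hcol j⟩)) i
    simp only [Submodule.coe_sum, Submodule.coe_smul, Finset.sum_apply, Pi.smul_apply,
      smul_eq_mul] at h
    simpa [Matrix.mul_apply, Y, Z, mul_comm] using h
  -- Y has linearly independent columns
  have hYinj : Function.Injective Y.mulVec := by
    rw [Matrix.mulVec_injective_iff]
    have := (b.linearIndependent).map' R.subtype (Submodule.ker_subtype R)
    convert this using 1
    all_goals rfl
  have hkerY : LinearMap.ker Y.mulVecLin = ⊥ := by
    rw [LinearMap.ker_eq_bot]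
    exact hYinj
  obtain ⟨g, hg⟩ := Y.mulVecLin.exists_leftInverse_of_injective hkerY
  let P : Matrix (Fin r) (Fin n) F := LinearMap.toMatrix' g
  have hPY : P * Y = 1 := by
    apply Matrix.toLin'.injective
    rw [Matrix.toLin'_mul]
    show (Matrix.toLin' (LinearMap.toMatrix' g)).comp (Matrix.toLin' Y) = _
    rw [Matrix.toLin'_toMatrix', Matrix.toLin'_apply' Y, hg, Matrix.toLin'_one]
  have hsymZY : Zᵀ * Yᵀ = Y * Z := by
    have : (Y * Z)ᵀ = Y * Z := by rw [hYZ]; exact hA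
    rw [Matrix.transpose_mul] at this
    exact this
  have hZ : Z = (P * Zᵀ) * Yᵀ := by
    calc Z = (P * Y) * Z := by rw [hPY, Matrix.one_mul]
    _ = P * (Y * Z) := by rw [Matrix.mul_assoc]
    _ = P * (Zᵀ * Yᵀ) := by rw [hsymZY]
    _ = (P * Zᵀ) * Yᵀ := by rw [Matrix.mul_assoc]
  set S : Matrix (Fin r) (Fin r) F := P * Zᵀ with hS
  have hAS : A = Y * S * Yᵀ := by
    rw [← hYZ, Matrix.mul_assoc, ← hZ]
  have hYP : Yᵀ * Pᵀ = 1 := by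
    rw [← Matrix.transpose_mul, hPY, Matrix.transpose_one]
  have hrecover : P * A * Pᵀ = S := by
    rw [hAS]
    calc P * (Y * S * Yᵀ) * Pᵀ = (P * Y) * S * (Yᵀ * Pᵀ) := by
          simp only [Matrix.mul_assoc]
    _ = S := by rw [hPY, hYP, Matrix.one_mul, Matrix.mul_one]
  have hSsymm : S.IsSymm := by
    have hAT : A = Y * Sᵀ * Yᵀ := by
      conv_lhs => rw [← hA.eq, hAS]
      simp [Matrix.transpose_mul, Matrix.mul_assoc]
    have : P * A * Pᵀ = Sᵀ := by
      rw [hAT]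
      calc P * (Y * Sᵀ * Yᵀ) * Pᵀ = (P * Y) * Sᵀ * (Yᵀ * Pᵀ) := by
            simp only [Matrix.mul_assoc]
      _ = Sᵀ := by rw [hPY, hYP, Matrix.one_mul, Matrix.mul_one]
    rw [Matrix.IsSymm, ← this, hrecover]
  have hrankS : S.rank = r := by
    refine le_antisymm (S.rank_le_width) ?_
    have h1 : A.rank ≤ (S * Yᵀ).rank := by
      have : A = Y * (S * Yᵀ) := by rw [hAS, Matrix.mul_assoc]
      rw [this]
      exact Matrix.rank_mul_le_right _ _
    have h2 : (S * Yᵀ).rank ≤ S.rank := Matrix.rank_mul_le_left _ _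
    exact le_trans h1 h2
  have hSunit : IsUnit S := by
    have hsurj : Function.Surjective S.mulVecLin := by
      rw [← LinearMap.range_eq_top]
      apply Submodule.eq_top_of_finrank_eq
      rw [show Module.finrank F (LinearMap.range S.mulVecLin) = S.rank from rfl, hrankS]
      simp [Module.finrank_pi]
    have hbij : Function.Bijective S.mulVecLin :=
      ⟨LinearMap.injective_iff_surjective.2 hsurj, hsurj⟩
    let e := LinearEquiv.ofBijective S.mulVecLin hbij
    let T : Matrix (Fin r) (Fin r) F := LinearMap.toMatrix' (e.symm : (Fin r → F) →ₗ[F] (Fin r → F))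
    have hTS : T * S = 1 := by
      apply Matrix.toLin'.injective
      rw [Matrix.toLin'_mul, Matrix.toLin'_one]
      apply LinearMap.ext
      intro v
      show Matrix.toLin' T (Matrix.toLin' S v) = v
      have h1 : Matrix.toLin' S v = e v := by rw [Matrix.toLin'_apply' S]; rfl
      rw [h1]
      show Matrix.toLin' (LinearMap.toMatrix' (e.symm : (Fin r → F) →ₗ[F] (Fin r → F))) (e v) = v
      rw [Matrix.toLin'_toMatrix']
      exact e.symm_apply_apply v
    haveI := invertibleOfLeftInverse S T hTS
    exact isUnit_of_invertible S
  exact ⟨S, Y, hSsymm, hSunit, hAS⟩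

theorem rank_le_iff_exists_congruence_decomp {F : Type*} [Field F] {n k : ℕ}
    (A : Matrix (Fin n) (Fin n) F) (hA : A.IsSymm) :
    A.rank ≤ k ↔ ∃ (B : Matrix (Fin k) (Fin k) F) (U : Matrix (Fin k) (Fin n) F),
      B.IsSymm ∧ IsUnit B ∧ A = Uᵀ * B * U := by
  constructor
  · intro hk
    obtain ⟨S, Y, hSsymm, hSunit, hAS⟩ := aux_decomp A hA
    have hrk : A.rank + (k - A.rank) = k := by omega
    let eq : (Fin A.rank ⊕ Fin (k - A.rank)) ≃ Fin k := finSumFinEquiv.trans (finCongr hrk)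
    let B₀ : Matrix (Fin A.rank ⊕ Fin (k - A.rank)) (Fin A.rank ⊕ Fin (k - A.rank)) F :=
      Matrix.fromBlocks S 0 0 1
    let N : Matrix (Fin A.rank ⊕ Fin (k - A.rank)) (Fin n) F := Matrix.fromRows Yᵀ 0
    have hB₀ : B₀ᵀ = B₀ := by
      show (Matrix.fromBlocks S 0 0 1)ᵀ = _
      rw [Matrix.fromBlocks_transpose]
      simp [hSsymm.eq]
      rfl
    have hkey : Nᵀ * B₀ * N = A := by
      show (Matrix.fromRows Yᵀ 0)ᵀ * Matrix.fromBlocks S 0 0 1 * Matrix.fromRows Yᵀ 0 = A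
      rw [Matrix.transpose_fromRows, Matrix.transpose_transpose, Matrix.transpose_zero,
        Matrix.fromCols_mul_fromBlocks, Matrix.fromCols_mul_fromRows]
      simp [hAS]
    refine ⟨B₀.submatrix eq.symm eq.symm, N.submatrix eq.symm id, ?_, ?_, ?_⟩
    · rw [Matrix.IsSymm, Matrix.transpose_submatrix, hB₀]
    · rw [Matrix.isUnit_iff_isUnit_det, Matrix.det_submatrix_equiv_self]
      have hd : B₀.det = S.det * Matrix.det (1 : Matrix (Fin (k - A.rank)) (Fin (k - A.rank)) F) :=
        Matrix.det_fromBlocks_zero₂₁ S 0 1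
      rw [hd, Matrix.det_one, mul_one]
      exact (Matrix.isUnit_iff_isUnit_det S).mp hSunit
    · rw [Matrix.transpose_submatrix, Matrix.submatrix_mul_equiv, Matrix.submatrix_mul_equiv,
        hkey, Matrix.submatrix_id_id]
  · rintro ⟨B, U, hB, hBu, rfl⟩
    calc (Uᵀ * B * U).rank ≤ U.rank := Matrix.rank_mul_le_right _ _
    _ ≤ k := U.rank_le_height
end

section
/- Let F = 𝔽_q with q odd, let k be odd, and let ν be a nonsquare in F. Then the matrix diag(I_{k−1}, ν) is projectively congruent to I_k; that is, there exist a nonzero d ∈ F and an invertible matrix C with diag(I_{k−1}, ν) congruent to d·I_k, and one may take d = ν (since det(ν·diag(I_{k−1},ν)) = ν^{k+1} is a square). -/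
open Matrix

lemma exists_sq_add_sq' {F : Type*} [Field F] [Fintype F] (hq : Odd (Fintype.card F))
    (x : F) : ∃ a b : F, a ^ 2 + b ^ 2 = x := by
  obtain ⟨a, b, hab⟩ := FiniteField.exists_root_sum_quadratic
    (f := (Polynomial.X ^ 2 : Polynomial F)) (g := Polynomial.X ^ 2 - Polynomial.C x)
    (Polynomial.degree_X_pow 2) (Polynomial.degree_X_pow_sub_C (by norm_num) x)
    (Nat.odd_iff.mp hq)
  refine ⟨a, b, ?_⟩
  rw [← sub_eq_zero]
  simpa [← add_sub_assoc] using hab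

theorem diag_nonsquare_projectively_congruent_id {F : Type*} [Field F] [Fintype F]
    (hq : Odd (Fintype.card F)) {k : ℕ} (hk : Odd k) (ν : F)
    (hν : ¬∃ c : F, ν = c ^ 2) :
    ∃ C : Matrix (Fin k) (Fin k) F, IsUnit C ∧
      Matrix.diagonal (fun i : Fin k => if (i : ℕ) < k - 1 then 1 else ν) =
        Cᵀ * (ν • (1 : Matrix (Fin k) (Fin k) F)) * C := by
  obtain ⟨p, hp⟩ := hk
  have hk2 : k = 2 * p + 1 := hp
  have hν0 : ν ≠ 0 := fun h => hν ⟨0, by simp [h]⟩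
  have hs0 : (ν⁻¹ : F) ≠ 0 := inv_ne_zero hν0
  have hνs : ν * ν⁻¹ = 1 := mul_inv_cancel₀ hν0
  obtain ⟨a, b, hab⟩ := exists_sq_add_sq' hq ν⁻¹
  -- the 2×2 rotation-like block
  set A : Matrix (Fin 2) (Fin 2) F := !![a, b; -b, a] with hA
  have hAA : Aᵀ * A = Matrix.diagonal (fun _ : Fin 2 => ν⁻¹) := by
    ext i j
    fin_cases i <;> fin_cases j <;>
      simp [hA, Matrix.mul_apply, Fin.sum_univ_two, Matrix.diagonal, Matrix.vecHead,
        Matrix.vecTail] <;>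
      first
        | linear_combination hab
        | ring1
  have hdetA : A.det = ν⁻¹ := by
    rw [hA, Matrix.det_fin_two_of]; linear_combination hab
  -- the big block matrix and the reindexing equivalence
  set M : Matrix ((Fin 2 × Fin p) ⊕ Fin 1) ((Fin 2 × Fin p) ⊕ Fin 1) F :=
    Matrix.fromBlocks (Matrix.blockDiagonal fun _ : Fin p => A) 0 0 1 with hM
  let e : Fin k ≃ (Fin 2 × Fin p) ⊕ Fin 1 :=
    (finCongr hk2).trans (finSumFinEquiv.symm.trans
      (Equiv.sumCongr finProdFinEquiv.symm (Equiv.refl (Fin 1))))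
  set G : ((Fin 2 × Fin p) ⊕ Fin 1) → F := Sum.elim (fun _ => ν⁻¹) (fun _ => 1) with hG
  have h1 : (Matrix.blockDiagonal fun _ : Fin p => A)ᵀ *
      (Matrix.blockDiagonal fun _ : Fin p => A) =
      Matrix.diagonal (fun _ : Fin 2 × Fin p => ν⁻¹) := by
    rw [Matrix.blockDiagonal_transpose, ← Matrix.blockDiagonal_mul]
    simp only [hAA]
    rw [Matrix.blockDiagonal_diagonal]
  have hMM : Mᵀ * M = Matrix.diagonal G := by
    rw [hM, Matrix.fromBlocks_transpose, Matrix.fromBlocks_multiply]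
    simp only [Matrix.transpose_zero, Matrix.transpose_one, Matrix.mul_zero, Matrix.zero_mul,
      Matrix.mul_one, Matrix.one_mul, add_zero, zero_add, h1]
    rw [← Matrix.diagonal_one, Matrix.fromBlocks_diagonal]
  refine ⟨M.submatrix e e, ?_, ?_⟩
  · rw [Matrix.isUnit_iff_isUnit_det, Matrix.det_submatrix_equiv_self, hM,
      Matrix.det_fromBlocks_zero₂₁, Matrix.det_blockDiagonal, Matrix.det_one, mul_one]
    simp only [hdetA, Finset.prod_const, Finset.card_univ, Fintype.card_fin]
    exact isUnit_iff_ne_zero.mpr (pow_ne_zero _ hs0)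
  · rw [Matrix.mul_smul, Matrix.mul_one, Matrix.smul_mul, Matrix.transpose_submatrix,
      Matrix.submatrix_mul_equiv, hMM]
    ext i j
    rw [Matrix.smul_apply, Matrix.submatrix_apply]
    by_cases hij : i = j
    · subst hij
      rw [Matrix.diagonal_apply_eq, Matrix.diagonal_apply_eq]
      have hkm1 : k - 1 = 2 * p := by omega
      by_cases h2 : (i : ℕ) < 2 * p
      · have he : e i = Sum.inl (finProdFinEquiv.symm ⟨(i : ℕ), h2⟩) := by
          have h1 : (finCongr hk2 i : Fin (2 * p + 1)) =
              Fin.castAdd 1 ⟨(i : ℕ), h2⟩ := by ext; simp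
          show (Equiv.sumCongr finProdFinEquiv.symm (Equiv.refl (Fin 1)))
            (finSumFinEquiv.symm (finCongr hk2 i)) = _
          rw [h1, finSumFinEquiv_symm_apply_castAdd]
          rfl
        rw [he, if_pos (hkm1 ▸ h2)]
        simp [hG, hνs]
      · have hieq : (i : ℕ) = 2 * p := by omega
        have he : e i = Sum.inr 0 := by
          have h1 : (finCongr hk2 i : Fin (2 * p + 1)) =
              Fin.natAdd (2 * p) (0 : Fin 1) := by ext; simp [hieq]
          show (Equiv.sumCongr finProdFinEquiv.symm (Equiv.refl (Fin 1)))
            (finSumFinEquiv.symm (finCongr hk2 i)) = _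
          rw [h1, finSumFinEquiv_symm_apply_natAdd]
          rfl
        rw [he, if_neg (by omega)]
        simp [hG]
    · rw [Matrix.diagonal_apply_ne _ hij,
        Matrix.diagonal_apply_ne _ (fun h => hij (e.injective h)), smul_zero]
end
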